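/- Let π and μ be policies with π(a|s) > 0 and μ(a|s) > 0 for all s ∈ S, a ∈ A. If Σ_s d^μ(s) Σ_a Q^μ(s,a) μ(a|s) log(π(a|s)/μ(a|s)) > 0, then J(π) > J(μ). That is, any policy whose weighted KL divergence to the improved policy is strictly smaller than that of μ itself achieves strictly larger expected return. -/

import Mathlib

/-- Induced state-transition matrix `M_π(s,s') = ∑ a, π(a|s) p(s'|s,a)`. -/
noncomputable def transMat {S A : Type*} [Fintype S] [Fintype A]
    (p : S → A → S → ℝ) (π : S → A → ℝ) : Matrix S S ℝ :=
  Matrix.of fun s s' => ∑ a, π s a * p s a s'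

/-- Expected one-step reward `r_π(s) = ∑ a, π(a|s) r(s,a)`. -/
noncomputable def rPol {S A : Type*} [Fintype A]
    (r : S → A → ℝ) (π : S → A → ℝ) (s : S) : ℝ :=
  ∑ a, π s a * r s a

/-- Value function `V^π(s) = ∑_{k} γ^k (M_π^k r_π)(s)`. -/
noncomputable def Vpi {S A : Type*} [Fintype S] [Fintype A] [DecidableEq S]
    (p : S → A → S → ℝ) (r : S → A → ℝ) (γ : ℝ) (π : S → A → ℝ) (s : S) : ℝ :=
  ∑' k : ℕ, γ ^ k * ((transMat p π ^ k).mulVec (rPol r π)) s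

/-- Action-value function `Q^π(s,a) = r(s,a) + γ ∑_{s'} p(s'|s,a) V^π(s')`. -/
noncomputable def Qpi {S A : Type*} [Fintype S] [Fintype A] [DecidableEq S]
    (p : S → A → S → ℝ) (r : S → A → ℝ) (γ : ℝ) (π : S → A → ℝ) (s : S) (a : A) : ℝ :=
  r s a + γ * ∑ s', p s a s' * Vpi p r γ π s'

/-- Discounted state distribution `d^π(s) = ∑_{t} γ^t (d₀ᵀ M_π^t)(s)`. -/
noncomputable def dPi {S A : Type*} [Fintype S] [Fintype A] [DecidableEq S]
    (p : S → A → S → ℝ) (d₀ : S → ℝ) (γ : ℝ) (π : S → A → ℝ) (s : S) : ℝ :=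
  ∑' t : ℕ, γ ^ t * Matrix.vecMul d₀ (transMat p π ^ t) s

/-- Expected return `J(π) = ∑ s, d₀(s) V^π(s)`. -/
noncomputable def Jpi {S A : Type*} [Fintype S] [Fintype A] [DecidableEq S]
    (p : S → A → S → ℝ) (r : S → A → ℝ) (d₀ : S → ℝ) (γ : ℝ) (π : S → A → ℝ) : ℝ :=
  ∑ s, d₀ s * Vpi p r γ π s

set_option linter.unusedSectionVars false

namespace ApproxProj

open Matrix Finset

variable {S A : Type*} [Fintype S] [Fintype A] [DecidableEq S]

lemma mulVec_apply (M : Matrix S S ℝ) (x : S → ℝ) (s : S) :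
    M.mulVec x s = ∑ s', M s s' * x s' := rfl

lemma vecMul_apply (w : S → ℝ) (M : Matrix S S ℝ) (s : S) :
    Matrix.vecMul w M s = ∑ i, w i * M i s := rfl

lemma pow_nonneg' {M : Matrix S S ℝ} (hM : ∀ i j, 0 ≤ M i j) :
    ∀ k i j, 0 ≤ (M ^ k) i j := by
  intro k
  induction k with
  | zero =>
    intro i j
    rw [pow_zero]
    by_cases h : i = j <;> simp [Matrix.one_apply, h]
  | succ k ih =>
    intro i j
    rw [pow_succ, Matrix.mul_apply]
    exact Finset.sum_nonneg fun l _ => mul_nonneg (ih i l) (hM l j)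

lemma pow_rowsum {M : Matrix S S ℝ} (h1 : ∀ i, ∑ j, M i j = 1) :
    ∀ k i, ∑ j, (M ^ k) i j = 1 := by
  intro k
  induction k with
  | zero =>
    intro i
    simp [pow_zero, Matrix.one_apply]
  | succ k ih =>
    intro i
    simp only [pow_succ, Matrix.mul_apply]
    rw [Finset.sum_comm]
    calc ∑ j', ∑ j, (M ^ k) i j' * M j' j = ∑ j', (M ^ k) i j' * ∑ j, M j' j := by
          simp_rw [Finset.mul_sum]
      _ = 1 := by simp_rw [h1]; simpa using ih i


lemma mulVec_bound {M : Matrix S S ℝ} (h0 : ∀ i j, 0 ≤ M i j) (h1 : ∀ i, ∑ j, M i j = 1)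
    {x : S → ℝ} {c : ℝ} (hx : ∀ s, |x s| ≤ c) (s : S) : |M.mulVec x s| ≤ c := by
  rw [mulVec_apply]
  calc |∑ s', M s s' * x s'| ≤ ∑ s', |M s s' * x s'| := Finset.abs_sum_le_sum_abs _ _
    _ ≤ ∑ s', M s s' * c := by
        refine Finset.sum_le_sum fun s' _ => ?_
        rw [abs_mul, abs_of_nonneg (h0 s s')]
        exact mul_le_mul_of_nonneg_left (hx s') (h0 s s')
    _ = c := by rw [← Finset.sum_mul, h1 s, one_mul]

lemma mulVec_pow_bound {M : Matrix S S ℝ} (h0 : ∀ i j, 0 ≤ M i j) (h1 : ∀ i, ∑ j, M i j = 1)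
    {x : S → ℝ} {c : ℝ} (hx : ∀ s, |x s| ≤ c) (k : ℕ) (s : S) : |((M ^ k).mulVec x) s| ≤ c :=
  mulVec_bound (pow_nonneg' h0 k) (pow_rowsum h1 k) hx s

lemma mulVec_nonneg {M : Matrix S S ℝ} (h0 : ∀ i j, 0 ≤ M i j)
    {x : S → ℝ} (hx : ∀ s, 0 ≤ x s) (s : S) : 0 ≤ M.mulVec x s := by
  rw [mulVec_apply]
  exact Finset.sum_nonneg fun s' _ => mul_nonneg (h0 s s') (hx s')

lemma vecMul_pow_nonneg {M : Matrix S S ℝ} (h0 : ∀ i j, 0 ≤ M i j)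
    {w : S → ℝ} (hw : ∀ s, 0 ≤ w s) (t : ℕ) (s : S) : 0 ≤ Matrix.vecMul w (M ^ t) s := by
  rw [vecMul_apply]
  exact Finset.sum_nonneg fun i _ => mul_nonneg (hw i) (pow_nonneg' h0 t i s)

lemma vecMul_pow_total {M : Matrix S S ℝ} (h1 : ∀ i, ∑ j, M i j = 1)
    {w : S → ℝ} (t : ℕ) : ∑ s, Matrix.vecMul w (M ^ t) s = ∑ s, w s := by
  simp_rw [vecMul_apply]
  rw [Finset.sum_comm]
  simp_rw [← Finset.mul_sum, pow_rowsum h1 t, mul_one]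

/-- abs of each component bounded by the sum of abs. -/
lemma abs_le_sum_abs (x : S → ℝ) (s : S) : |x s| ≤ ∑ s', |x s'| :=
  Finset.single_le_sum (fun i _ => abs_nonneg (x i)) (Finset.mem_univ s)


variable (p : S → A → S → ℝ) (r : S → A → ℝ) (π μ : S → A → ℝ)

/-- matrix with entries `∑ a, μ(a|s) log(π/μ)(a|s) p(s'|s,a)`. -/
noncomputable def Mlog : Matrix S S ℝ :=
  Matrix.of fun s s' => ∑ a, (μ s a * Real.log (π s a / μ s a)) * p s a s'

/-- `∑ a, μ(a|s) r(s,a) log(π/μ)(a|s)`. -/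
noncomputable def rLog (s : S) : ℝ :=
  ∑ a, μ s a * r s a * Real.log (π s a / μ s a)

/-- first-order correction vectors. -/
noncomputable def Dvec : ℕ → S → ℝ
  | 0 => rLog r π μ
  | k + 1 => fun s =>
      (Mlog p π μ).mulVec ((transMat p μ ^ k).mulVec (rPol r μ)) s
        + (transMat p μ).mulVec (Dvec k) s

lemma swap_sum (s : S) (g : A → ℝ) (x : S → ℝ) :
    ∑ s', (∑ a, g a * p s a s') * x s' = ∑ a, g a * ∑ s', p s a s' * x s' := by
  simp_rw [Finset.sum_mul, Finset.mul_sum, mul_assoc]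
  exact Finset.sum_comm

lemma transMat_mulVec_apply (x : S → ℝ) (s : S) :
    (transMat p μ).mulVec x s = ∑ a, μ s a * ∑ s', p s a s' * x s' := by
  rw [mulVec_apply]
  exact swap_sum p s _ x

lemma Mlog_mulVec_apply (x : S → ℝ) (s : S) :
    (Mlog p π μ).mulVec x s
      = ∑ a, (μ s a * Real.log (π s a / μ s a)) * ∑ s', p s a s' * x s' := by
  rw [mulVec_apply]
  exact swap_sum p s _ x

/-- The key first-order inequality, proven by induction on the horizon with a
multiplicative parameter `lam`. -/
lemma key (hp0 : ∀ s a s', 0 ≤ p s a s') (hr : ∀ s a, 0 < r s a)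
    (hπpos : ∀ s a, 0 < π s a) (hμpos : ∀ s a, 0 < μ s a) :
    ∀ (k : ℕ) (lam : ℝ), 0 < lam → ∀ s,
      (1 + Real.log lam) * ((transMat p μ ^ k).mulVec (rPol r μ)) s + Dvec p r π μ k s
        ≤ lam * ((transMat p π ^ k).mulVec (rPol r π)) s := by
  intro k
  induction k with
  | zero =>
    intro lam hlam s
    simp only [pow_zero, Matrix.one_mulVec, Dvec, rLog, rPol]
    rw [Finset.mul_sum, Finset.mul_sum, ← Finset.sum_add_distrib]
    refine Finset.sum_le_sum fun a _ => ?_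
    have hμa := hμpos s a
    have hπa := hπpos s a
    have hra := hr s a
    have hx : 0 < lam * (π s a / μ s a) := mul_pos hlam (div_pos hπa hμa)
    have h1 : Real.log lam + Real.log (π s a / μ s a) ≤ lam * (π s a / μ s a) - 1 := by
      rw [← Real.log_mul hlam.ne' (div_pos hπa hμa).ne']
      exact Real.log_le_sub_one_of_pos hx
    have h2 : lam * (π s a / μ s a) * μ s a = lam * π s a := by
      field_simp
    nlinarith [mul_le_mul_of_nonneg_left h1 (mul_pos hμa hra).le,
      mul_pos hμa hra, hra.le, hμa.le]
  | succ k ih =>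
    intro lam hlam s
    have hπpow : (transMat p π ^ (k + 1)).mulVec (rPol r π)
        = (transMat p π).mulVec ((transMat p π ^ k).mulVec (rPol r π)) := by
      rw [Matrix.mulVec_mulVec, ← pow_succ']
    have hμpow : (transMat p μ ^ (k + 1)).mulVec (rPol r μ)
        = (transMat p μ).mulVec ((transMat p μ ^ k).mulVec (rPol r μ)) := by
      rw [Matrix.mulVec_mulVec, ← pow_succ']
    rw [hπpow, hμpow]
    set Xπ : S → ℝ := (transMat p π ^ k).mulVec (rPol r π) with hXπ
    set Xμ : S → ℝ := (transMat p μ ^ k).mulVec (rPol r μ) with hXμ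
    show (1 + Real.log lam) * (transMat p μ).mulVec Xμ s + Dvec p r π μ (k + 1) s
        ≤ lam * (transMat p π).mulVec Xπ s
    have hD : Dvec p r π μ (k + 1) s
        = (Mlog p π μ).mulVec Xμ s + (transMat p μ).mulVec (Dvec p r π μ k) s := rfl
    rw [hD, transMat_mulVec_apply p μ Xμ s, transMat_mulVec_apply p π Xπ s,
      transMat_mulVec_apply p μ (Dvec p r π μ k) s, Mlog_mulVec_apply p π μ Xμ s,
      Finset.mul_sum, Finset.mul_sum, ← Finset.sum_add_distrib, ← Finset.sum_add_distrib]
    refine Finset.sum_le_sum fun a _ => ?_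
    have hμa := hμpos s a
    have hπa := hπpos s a
    have hlam' : 0 < lam * (π s a / μ s a) := mul_pos hlam (div_pos hπa hμa)
    have hsum : (1 + Real.log (lam * (π s a / μ s a))) * ∑ s', p s a s' * Xμ s'
          + ∑ s', p s a s' * Dvec p r π μ k s'
        ≤ lam * (π s a / μ s a) * ∑ s', p s a s' * Xπ s' := by
      have h := fun s' => ih (lam * (π s a / μ s a)) hlam' s'
      have h' : ∑ s', p s a s' * ((1 + Real.log (lam * (π s a / μ s a))) * Xμ s'
            + Dvec p r π μ k s')
          ≤ ∑ s', p s a s' * (lam * (π s a / μ s a) * Xπ s') :=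
        Finset.sum_le_sum fun s' _ => mul_le_mul_of_nonneg_left (h s') (hp0 s a s')
      calc (1 + Real.log (lam * (π s a / μ s a))) * ∑ s', p s a s' * Xμ s'
            + ∑ s', p s a s' * Dvec p r π μ k s'
          = ∑ s', p s a s' * ((1 + Real.log (lam * (π s a / μ s a))) * Xμ s'
              + Dvec p r π μ k s') := by
            rw [Finset.mul_sum, ← Finset.sum_add_distrib]
            refine Finset.sum_congr rfl fun s' _ => by ring
        _ ≤ ∑ s', p s a s' * (lam * (π s a / μ s a) * Xπ s') := h'
        _ = lam * (π s a / μ s a) * ∑ s', p s a s' * Xπ s' := by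
            rw [Finset.mul_sum]
            refine Finset.sum_congr rfl fun s' _ => by ring
    have hlog : Real.log (lam * (π s a / μ s a))
        = Real.log lam + Real.log (π s a / μ s a) :=
      Real.log_mul hlam.ne' (div_pos hπa hμa).ne'
    rw [hlog] at hsum
    have hmul := mul_le_mul_of_nonneg_left hsum hμa.le
    have hcancel : μ s a * (lam * (π s a / μ s a) * ∑ s', p s a s' * Xπ s')
        = lam * (π s a * ∑ s', p s a s' * Xπ s') := by
      field_simp
    nlinarith [hmul]


lemma summable_geom_lin {γ : ℝ} (hγ0 : 0 ≤ γ) (hγ1 : γ < 1) {v : ℕ → ℝ} {a b : ℝ}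
    (h : ∀ k, |v k| ≤ a + b * k) : Summable fun k => γ ^ k * v k := by
  have hs : Summable fun k : ℕ => a * γ ^ k + b * ((k : ℝ) * γ ^ k) := by
    refine Summable.add ((summable_geometric_of_lt_one hγ0 hγ1).mul_left a) ?_
    have := summable_pow_mul_geometric_of_norm_lt_one (R := ℝ) 1
      (by rwa [Real.norm_eq_abs, abs_of_nonneg hγ0])
    simpa [pow_one] using this.mul_left b
  refine Summable.of_abs (Summable.of_nonneg_of_le (fun k => abs_nonneg _) (fun k => ?_) hs)
  have hγk : (0:ℝ) ≤ γ ^ k := pow_nonneg hγ0 k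
  calc |γ ^ k * v k| = γ ^ k * |v k| := by rw [abs_mul, abs_of_nonneg hγk]
    _ ≤ γ ^ k * (a + b * k) := mul_le_mul_of_nonneg_left (h k) hγk
    _ = a * γ ^ k + b * ((k : ℝ) * γ ^ k) := by ring

lemma summable_geom_bdd {γ : ℝ} (hγ0 : 0 ≤ γ) (hγ1 : γ < 1) {v : ℕ → ℝ} {c : ℝ}
    (h : ∀ k, |v k| ≤ c) : Summable fun k => γ ^ k * v k :=
  summable_geom_lin hγ0 hγ1 (v := v) (a := c) (b := 0) (by simpa using h)

end ApproxProj

open ApproxProj in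
/-- If `∑ s, d^μ(s) ∑ a, Q^μ(s,a) μ(a|s) log (π(a|s) / μ(a|s)) > 0` then `J(π) > J(μ)`:
approximately projecting onto the improved policy strictly improves the return. -/
theorem approximate_projection_improves_state_action
    {S A : Type*} [Fintype S] [Fintype A] [DecidableEq S] [Nonempty S] [Nonempty A]
    (p : S → A → S → ℝ) (hp0 : ∀ s a s', 0 ≤ p s a s') (hp1 : ∀ s a, ∑ s', p s a s' = 1)
    (r : S → A → ℝ) (hr : ∀ s a, 0 < r s a)
    (d₀ : S → ℝ) (hd₀ : ∀ s, 0 ≤ d₀ s) (hd₀sum : ∑ s, d₀ s = 1)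
    (γ : ℝ) (hγ0 : 0 ≤ γ) (hγ1 : γ < 1)
    (π μ : S → A → ℝ)
    (hπpos : ∀ s a, 0 < π s a) (hπsum : ∀ s, ∑ a, π s a = 1)
    (hμpos : ∀ s a, 0 < μ s a) (hμsum : ∀ s, ∑ a, μ s a = 1)
    (hpos : 0 < ∑ s, dPi p d₀ γ μ s * ∑ a, Qpi p r γ μ s a * μ s a * Real.log (π s a / μ s a)) :
    Jpi p r d₀ γ μ < Jpi p r d₀ γ π := by
  classical
  -- basic facts about the transition matrices
  have hMμ0 : ∀ i j, 0 ≤ transMat p μ i j := fun i j =>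
    Finset.sum_nonneg fun a _ => mul_nonneg (hμpos i a).le (hp0 i a j)
  have hMπ0 : ∀ i j, 0 ≤ transMat p π i j := fun i j =>
    Finset.sum_nonneg fun a _ => mul_nonneg (hπpos i a).le (hp0 i a j)
  have hMμ1 : ∀ i, ∑ j, transMat p μ i j = 1 := by
    intro i
    show ∑ j, ∑ a, μ i a * p i a j = 1
    rw [Finset.sum_comm]
    simp_rw [← Finset.mul_sum, hp1, mul_one]
    exact hμsum i
  have hMπ1 : ∀ i, ∑ j, transMat p π i j = 1 := by
    intro i
    show ∑ j, ∑ a, π i a * p i a j = 1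
    rw [Finset.sum_comm]
    simp_rw [← Finset.mul_sum, hp1, mul_one]
    exact hπsum i
  -- reward vector bounds
  have hrμ0 : ∀ s, 0 ≤ rPol r μ s := fun s =>
    Finset.sum_nonneg fun a _ => mul_nonneg (hμpos s a).le (hr s a).le
  set Crμ := ∑ s, |rPol r μ s| with hCrμdef
  have hCrμ : ∀ s, |rPol r μ s| ≤ Crμ := fun s => abs_le_sum_abs _ s
  have hCrμ0 : (0:ℝ) ≤ Crμ := Finset.sum_nonneg fun s _ => abs_nonneg _
  set Crπ := ∑ s, |rPol r π s| with hCrπdef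
  have hCrπ : ∀ s, |rPol r π s| ≤ Crπ := fun s => abs_le_sum_abs _ s
  have hXμb : ∀ k s, |((transMat p μ ^ k).mulVec (rPol r μ)) s| ≤ Crμ :=
    fun k s => mulVec_pow_bound hMμ0 hMμ1 hCrμ k s
  have hXπb : ∀ k s, |((transMat p π ^ k).mulVec (rPol r π)) s| ≤ Crπ :=
    fun k s => mulVec_pow_bound hMπ0 hMπ1 hCrπ k s
  -- bound for Mlog-multiplications
  set B := (∑ s, ∑ s', |Mlog p π μ s s'|) * Crμ with hBdef
  have hMlogb : ∀ (x : S → ℝ), (∀ s', |x s'| ≤ Crμ) → ∀ s,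
      |(Mlog p π μ).mulVec x s| ≤ B := by
    intro x hx s
    rw [mulVec_apply]
    calc |∑ s', Mlog p π μ s s' * x s'| ≤ ∑ s', |Mlog p π μ s s' * x s'| :=
          Finset.abs_sum_le_sum_abs _ _
      _ ≤ ∑ s', |Mlog p π μ s s'| * Crμ := by
          refine Finset.sum_le_sum fun s' _ => ?_
          rw [abs_mul]
          exact mul_le_mul_of_nonneg_left (hx s') (abs_nonneg _)
      _ = (∑ s', |Mlog p π μ s s'|) * Crμ := by rw [Finset.sum_mul]
      _ ≤ (∑ s, ∑ s', |Mlog p π μ s s'|) * Crμ := by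
          refine mul_le_mul_of_nonneg_right ?_ hCrμ0
          exact Finset.single_le_sum (f := fun i => ∑ s', |Mlog p π μ i s'|)
            (fun i _ => Finset.sum_nonneg fun j _ => abs_nonneg _) (Finset.mem_univ s)
  -- bound on the correction vectors
  set A0 := ∑ s, |Dvec p r π μ 0 s| with hA0def
  have hA00 : ∀ s, |Dvec p r π μ 0 s| ≤ A0 := fun s => abs_le_sum_abs _ s
  have hDb : ∀ k s, |Dvec p r π μ k s| ≤ A0 + B * k := by
    intro k
    induction k with
    | zero => intro s; simpa using hA00 s
    | succ k ih =>
      intro s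
      have h1 : |(Mlog p π μ).mulVec ((transMat p μ ^ k).mulVec (rPol r μ)) s| ≤ B :=
        hMlogb _ (hXμb k) s
      have h2 : |(transMat p μ).mulVec (Dvec p r π μ k) s| ≤ A0 + B * k :=
        mulVec_bound hMμ0 hMμ1 ih s
      have h3 : Dvec p r π μ (k + 1) s
          = (Mlog p π μ).mulVec ((transMat p μ ^ k).mulVec (rPol r μ)) s
            + (transMat p μ).mulVec (Dvec p r π μ k) s := rfl
      calc |Dvec p r π μ (k + 1) s| ≤ B + (A0 + B * k) := by
            rw [h3]; exact (abs_add_le _ _).trans (add_le_add h1 h2)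
        _ = A0 + B * ((k:ℝ) + 1) := by ring
        _ = A0 + B * ((k + 1 : ℕ) : ℝ) := by push_cast; ring
  -- summability
  have hsumXμ : ∀ s, Summable fun k => γ ^ k * ((transMat p μ ^ k).mulVec (rPol r μ)) s :=
    fun s => summable_geom_bdd hγ0 hγ1 (fun k => hXμb k s)
  have hsumXπ : ∀ s, Summable fun k => γ ^ k * ((transMat p π ^ k).mulVec (rPol r π)) s :=
    fun s => summable_geom_bdd hγ0 hγ1 (fun k => hXπb k s)
  have hsumD : ∀ s, Summable fun k => γ ^ k * Dvec p r π μ k s :=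
    fun s => summable_geom_lin hγ0 hγ1 (fun k => hDb k s)
  set K : S → ℝ := fun s => ∑' k, γ ^ k * Dvec p r π μ k s with hKdef
  -- the main pointwise inequality : Vμ + K ≤ Vπ
  have hVK : ∀ s, Vpi p r γ μ s + K s ≤ Vpi p r γ π s := by
    intro s
    have hle : ∀ k : ℕ, γ ^ k * ((transMat p μ ^ k).mulVec (rPol r μ)) s
          + γ ^ k * Dvec p r π μ k s
        ≤ γ ^ k * ((transMat p π ^ k).mulVec (rPol r π)) s := by
      intro k
      have h := key p r π μ hp0 hr hπpos hμpos k 1 one_pos s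
      rw [Real.log_one] at h
      have h' := mul_le_mul_of_nonneg_left h (pow_nonneg hγ0 k)
      calc γ ^ k * ((transMat p μ ^ k).mulVec (rPol r μ)) s + γ ^ k * Dvec p r π μ k s
          = γ ^ k * ((1 + 0) * ((transMat p μ ^ k).mulVec (rPol r μ)) s
              + Dvec p r π μ k s) := by ring
        _ ≤ γ ^ k * (1 * ((transMat p π ^ k).mulVec (rPol r π)) s) := h'
        _ = γ ^ k * ((transMat p π ^ k).mulVec (rPol r π)) s := by ring
    show (∑' k : ℕ, γ ^ k * ((transMat p μ ^ k).mulVec (rPol r μ)) s)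
        + (∑' k : ℕ, γ ^ k * Dvec p r π μ k s)
        ≤ ∑' k : ℕ, γ ^ k * ((transMat p π ^ k).mulVec (rPol r π)) s
    rw [← Summable.tsum_add (hsumXμ s) (hsumD s)]
    exact Summable.tsum_le_tsum hle ((hsumXμ s).add (hsumD s)) (hsumXπ s)
  -- fixed point equation for K
  have hs1 : ∀ s, Summable fun k =>
      γ ^ k * (Mlog p π μ).mulVec ((transMat p μ ^ k).mulVec (rPol r μ)) s :=
    fun s => summable_geom_bdd hγ0 hγ1 (fun k => hMlogb _ (hXμb k) s)
  have hs2 : ∀ s, Summable fun k => γ ^ k * (transMat p μ).mulVec (Dvec p r π μ k) s :=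
    fun s => summable_geom_lin hγ0 hγ1 (fun k => mulVec_bound hMμ0 hMμ1 (hDb k) s)
  have hKfix : ∀ s, K s = (Dvec p r π μ 0 s + γ * (Mlog p π μ).mulVec (Vpi p r γ μ) s)
      + γ * (transMat p μ).mulVec K s := by
    intro s
    have h0 : K s = γ ^ 0 * Dvec p r π μ 0 s + ∑' k, γ ^ (k + 1) * Dvec p r π μ (k + 1) s := by
      rw [hKdef]; exact Summable.tsum_eq_zero_add (hsumD s)
    have hsplit : ∀ k : ℕ, γ ^ (k + 1) * Dvec p r π μ (k + 1) s
        = γ * (γ ^ k * (Mlog p π μ).mulVec ((transMat p μ ^ k).mulVec (rPol r μ)) s)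
          + γ * (γ ^ k * (transMat p μ).mulVec (Dvec p r π μ k) s) := by
      intro k
      have h3 : Dvec p r π μ (k + 1) s
          = (Mlog p π μ).mulVec ((transMat p μ ^ k).mulVec (rPol r μ)) s
            + (transMat p μ).mulVec (Dvec p r π μ k) s := rfl
      rw [h3, pow_succ]; ring
    rw [h0]
    simp_rw [hsplit]
    rw [Summable.tsum_add ((hs1 s).mul_left γ) ((hs2 s).mul_left γ), tsum_mul_left, tsum_mul_left]
    have hA : (∑' k, γ ^ k * (Mlog p π μ).mulVec ((transMat p μ ^ k).mulVec (rPol r μ)) s)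
        = (Mlog p π μ).mulVec (Vpi p r γ μ) s := by
      have hrw : ∀ k : ℕ, γ ^ k * (Mlog p π μ).mulVec ((transMat p μ ^ k).mulVec (rPol r μ)) s
          = ∑ s', Mlog p π μ s s' * (γ ^ k * ((transMat p μ ^ k).mulVec (rPol r μ)) s') := by
        intro k
        rw [mulVec_apply, Finset.mul_sum]
        exact Finset.sum_congr rfl fun s' _ => by ring
      simp_rw [hrw]
      rw [Summable.tsum_finsetSum (fun s' _ => (hsumXμ s').mul_left (Mlog p π μ s s'))]
      rw [mulVec_apply]
      exact Finset.sum_congr rfl fun s' _ => tsum_mul_left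
    have hB : (∑' k, γ ^ k * (transMat p μ).mulVec (Dvec p r π μ k) s)
        = (transMat p μ).mulVec K s := by
      have hrw : ∀ k : ℕ, γ ^ k * (transMat p μ).mulVec (Dvec p r π μ k) s
          = ∑ s', transMat p μ s s' * (γ ^ k * Dvec p r π μ k s') := by
        intro k
        rw [mulVec_apply, Finset.mul_sum]
        exact Finset.sum_congr rfl fun s' _ => by ring
      simp_rw [hrw]
      rw [Summable.tsum_finsetSum (fun s' _ => (hsumD s').mul_left (transMat p μ s s'))]
      rw [mulVec_apply]
      exact Finset.sum_congr rfl fun s' _ => tsum_mul_left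
    rw [hA, hB, pow_zero, one_mul]
    ring
  -- identification of the one-step term with the Q-weighted log sum
  set lQ : S → ℝ := fun s => ∑ a, Qpi p r γ μ s a * μ s a * Real.log (π s a / μ s a)
    with hlQdef
  have hpos' : 0 < ∑ s, dPi p d₀ γ μ s * lQ s := by
    simpa only [hlQdef] using hpos
  have hlQeq : ∀ s, lQ s
      = Dvec p r π μ 0 s + γ * (Mlog p π μ).mulVec (Vpi p r γ μ) s := by
    intro s
    rw [Mlog_mulVec_apply]
    show ∑ a, (r s a + γ * ∑ s', p s a s' * Vpi p r γ μ s') * μ s a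
          * Real.log (π s a / μ s a)
        = (∑ a, μ s a * r s a * Real.log (π s a / μ s a))
          + γ * ∑ a, (μ s a * Real.log (π s a / μ s a)) * ∑ s', p s a s' * Vpi p r γ μ s'
    rw [Finset.mul_sum, ← Finset.sum_add_distrib]
    exact Finset.sum_congr rfl fun a _ => by ring
  have hKfix2 : ∀ s, K s = lQ s + γ * (transMat p μ).mulVec K s := by
    intro s
    rw [hKfix s, hlQeq s]
  -- facts about the discounted occupancy covectors
  have hu0 : ∀ (t : ℕ) s, 0 ≤ Matrix.vecMul d₀ (transMat p μ ^ t) s :=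
    fun t s => vecMul_pow_nonneg hMμ0 hd₀ t s
  have hut : ∀ t : ℕ, ∑ s, Matrix.vecMul d₀ (transMat p μ ^ t) s = 1 := by
    intro t
    rw [vecMul_pow_total hMμ1]
    exact hd₀sum
  have hdotb : ∀ (x : S → ℝ) (c : ℝ), (∀ s, |x s| ≤ c) → ∀ t : ℕ,
      |∑ s, Matrix.vecMul d₀ (transMat p μ ^ t) s * x s| ≤ c := by
    intro x c hx t
    calc |∑ s, Matrix.vecMul d₀ (transMat p μ ^ t) s * x s|
        ≤ ∑ s, |Matrix.vecMul d₀ (transMat p μ ^ t) s * x s| :=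
          Finset.abs_sum_le_sum_abs _ _
      _ ≤ ∑ s, Matrix.vecMul d₀ (transMat p μ ^ t) s * c := by
          refine Finset.sum_le_sum fun s _ => ?_
          rw [abs_mul, abs_of_nonneg (hu0 t s)]
          exact mul_le_mul_of_nonneg_left (hx s) (hu0 t s)
      _ = c := by rw [← Finset.sum_mul, hut t, one_mul]
  set ClQ := ∑ s, |lQ s| with hClQdef
  have hClQ : ∀ s, |lQ s| ≤ ClQ := fun s => abs_le_sum_abs _ s
  set CK := ∑ s, |K s| with hCKdef
  have hCK : ∀ s, |K s| ≤ CK := fun s => abs_le_sum_abs _ s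
  -- partial sum identity
  have hpartial : ∀ n : ℕ,
      ∑ t ∈ Finset.range n, γ ^ t * ∑ s, Matrix.vecMul d₀ (transMat p μ ^ t) s * lQ s
      = (∑ s, d₀ s * K s)
        - γ ^ n * ∑ s, Matrix.vecMul d₀ (transMat p μ ^ n) s * K s := by
    intro n
    induction n with
    | zero => simp [Matrix.vecMul_one]
    | succ n ih =>
      rw [Finset.sum_range_succ, ih]
      have hstep : ∑ s, Matrix.vecMul d₀ (transMat p μ ^ n) s * K s
          = (∑ s, Matrix.vecMul d₀ (transMat p μ ^ n) s * lQ s)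
            + γ * ∑ s, Matrix.vecMul d₀ (transMat p μ ^ (n + 1)) s * K s := by
        have h1 : ∀ s, Matrix.vecMul d₀ (transMat p μ ^ n) s * K s
            = Matrix.vecMul d₀ (transMat p μ ^ n) s * lQ s
              + γ * (Matrix.vecMul d₀ (transMat p μ ^ n) s
                  * ((transMat p μ).mulVec K) s) := by
          intro s
          rw [hKfix2 s]; ring
        have h2 : ∑ s, Matrix.vecMul d₀ (transMat p μ ^ n) s * ((transMat p μ).mulVec K) s
            = ∑ s, Matrix.vecMul d₀ (transMat p μ ^ (n + 1)) s * K s := by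
          have h3 := Matrix.dotProduct_mulVec (Matrix.vecMul d₀ (transMat p μ ^ n))
            (transMat p μ) K
          simpa [dotProduct, Matrix.vecMul_vecMul, ← pow_succ] using h3
        simp_rw [h1]
        rw [Finset.sum_add_distrib, ← Finset.mul_sum, h2]
      rw [hstep, pow_succ]
      ring
  -- limit of the partial sums
  have hsumT : Summable fun t : ℕ =>
      γ ^ t * ∑ s, Matrix.vecMul d₀ (transMat p μ ^ t) s * lQ s :=
    summable_geom_bdd hγ0 hγ1 (fun t => hdotb lQ ClQ hClQ t)
  have htail : Filter.Tendsto
      (fun n : ℕ => γ ^ n * ∑ s, Matrix.vecMul d₀ (transMat p μ ^ n) s * K s)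
      Filter.atTop (nhds 0) := by
    apply squeeze_zero_norm (a := fun n : ℕ => CK * γ ^ n)
    · intro n
      rw [Real.norm_eq_abs, abs_mul, abs_of_nonneg (pow_nonneg hγ0 n)]
      calc γ ^ n * |∑ s, Matrix.vecMul d₀ (transMat p μ ^ n) s * K s|
          ≤ γ ^ n * CK :=
            mul_le_mul_of_nonneg_left (hdotb K CK hCK n) (pow_nonneg hγ0 n)
        _ = CK * γ ^ n := mul_comm _ _
    · have := (tendsto_pow_atTop_nhds_zero_of_lt_one hγ0 hγ1).const_mul CK
      simpa using this
  have hT : (∑' t : ℕ, γ ^ t * ∑ s, Matrix.vecMul d₀ (transMat p μ ^ t) s * lQ s)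
      = ∑ s, d₀ s * K s := by
    refine tendsto_nhds_unique hsumT.hasSum.tendsto_sum_nat ?_
    have heq : (fun n : ℕ => ∑ t ∈ Finset.range n,
        γ ^ t * ∑ s, Matrix.vecMul d₀ (transMat p μ ^ t) s * lQ s)
        = fun n : ℕ => (∑ s, d₀ s * K s)
          - γ ^ n * ∑ s, Matrix.vecMul d₀ (transMat p μ ^ n) s * K s := funext hpartial
    rw [heq]
    have := Filter.Tendsto.const_sub (∑ s, d₀ s * K s) htail
    simpa using this
  -- the hypothesis sum equals ∑ d₀ K
  have hswap2 : ∑ s, dPi p d₀ γ μ s * lQ s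
      = ∑' t : ℕ, γ ^ t * ∑ s, Matrix.vecMul d₀ (transMat p μ ^ t) s * lQ s := by
    have h1 : ∀ s, dPi p d₀ γ μ s * lQ s
        = ∑' t : ℕ, γ ^ t * Matrix.vecMul d₀ (transMat p μ ^ t) s * lQ s := by
      intro s
      show (∑' t : ℕ, γ ^ t * Matrix.vecMul d₀ (transMat p μ ^ t) s) * lQ s = _
      rw [tsum_mul_right]
    have hsum3 : ∀ s, Summable fun t : ℕ =>
        γ ^ t * Matrix.vecMul d₀ (transMat p μ ^ t) s * lQ s := by
      intro s
      have hb : ∀ t : ℕ, |Matrix.vecMul d₀ (transMat p μ ^ t) s * lQ s| ≤ ClQ := by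
        intro t
        rw [abs_mul, abs_of_nonneg (hu0 t s)]
        calc Matrix.vecMul d₀ (transMat p μ ^ t) s * |lQ s|
            ≤ 1 * ClQ := by
              refine mul_le_mul ?_ (hClQ s) (abs_nonneg _) zero_le_one
              calc Matrix.vecMul d₀ (transMat p μ ^ t) s
                  ≤ ∑ s', Matrix.vecMul d₀ (transMat p μ ^ t) s' :=
                    Finset.single_le_sum (f := fun s' => Matrix.vecMul d₀ (transMat p μ ^ t) s')
                      (fun i _ => hu0 t i) (Finset.mem_univ s)
                _ = 1 := hut t
          _ = ClQ := one_mul _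
      have := summable_geom_bdd hγ0 hγ1 hb
      simpa [mul_assoc] using this
    simp_rw [h1]
    rw [← Summable.tsum_finsetSum (fun s _ => hsum3 s)]
    refine tsum_congr fun t => ?_
    rw [Finset.mul_sum]
    exact Finset.sum_congr rfl fun s _ => by ring
  -- conclusion
  have hW : 0 < ∑ s, d₀ s * K s := by
    rw [← hT, ← hswap2]
    exact hpos'
  have hfinal : (∑ s, d₀ s * Vpi p r γ μ s) + ∑ s, d₀ s * K s
      ≤ ∑ s, d₀ s * Vpi p r γ π s := by
    rw [← Finset.sum_add_distrib]
    refine Finset.sum_le_sum fun s _ => ?_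
    have h := mul_le_mul_of_nonneg_left (hVK s) (hd₀ s)
    calc d₀ s * Vpi p r γ μ s + d₀ s * K s = d₀ s * (Vpi p r γ μ s + K s) := by ring
      _ ≤ d₀ s * Vpi p r γ π s := h
  show (∑ s, d₀ s * Vpi p r γ μ s) < ∑ s, d₀ s * Vpi p r γ π s
  linarith
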